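/- arXiv:1808.04163 — 5 statements merged into one kernel-verified Lean document; each statement's English description precedes it below -/
import Mathlib

section
/- For the L2(0,1) orthogonal projection P onto the space of discontinuous piecewise polynomials of degree at most p on the uniform partition of [0,1] into n intervals, the function f(x) = x^{p+1} satisfies ‖f − P f‖_{L^2} = ((p+1)!/((2p+2)!·√(2p+3))) · n^{−(p+1)} · ‖f^{(p+1)}‖_{L^2}. -/
open Real MeasureTheory Set Polynomial

noncomputable def legG (m : ℕ) : Polynomial ℝ := (X * (X - 1)) ^ m

lemma poly_ftc (P : Polynomial ℝ) (a b : ℝ) :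
    ∫ x in a..b, (derivative P).eval x = P.eval b - P.eval a := by
  refine intervalIntegral.integral_eq_sub_of_hasDerivAt (fun x _ => P.hasDerivAt x) ?_
  exact ((derivative P).continuous_aeval).intervalIntegrable _ _

lemma poly_int_add (P Q : Polynomial ℝ) (a b : ℝ) :
    ∫ x in a..b, (P + Q).eval x = (∫ x in a..b, P.eval x) + ∫ x in a..b, Q.eval x := by
  simp only [Polynomial.eval_add]
  exact intervalIntegral.integral_add ((P.continuous).intervalIntegrable _ _)
    ((Q.continuous).intervalIntegrable _ _)

lemma poly_parts (q r : Polynomial ℝ) (a b : ℝ) :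
    ∫ x in a..b, (q * derivative r).eval x
      = q.eval b * r.eval b - q.eval a * r.eval a
        - ∫ x in a..b, (derivative q * r).eval x := by
  have h := poly_ftc (q * r) a b
  rw [Polynomial.derivative_mul] at h
  have h2 := poly_int_add (derivative q * r) (q * derivative r) a b
  rw [h2] at h
  simp only [Polynomial.eval_mul] at h ⊢
  linarith

lemma legG_factor (m : ℕ) : ∀ j ≤ m, ∃ h : Polynomial ℝ,
    derivative^[j] (legG m) = X ^ (m - j) * (X - 1) ^ (m - j) * h := by
  intro j
  induction j with
  | zero => exact fun _ => ⟨1, by simp [legG, mul_pow]⟩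
  | succ j ih =>
    intro hj
    obtain ⟨h, hh⟩ := ih (Nat.le_of_succ_le hj)
    have ha : m - j = (m - (j + 1)) + 1 := by omega
    refine ⟨(C ((m - (j+1) : ℕ) + 1 : ℝ)) * ((X - 1) * h + X * h) + X * (X - 1) * derivative h, ?_⟩
    rw [Function.iterate_succ_apply', hh, ha]
    simp only [Polynomial.derivative_mul, Polynomial.derivative_pow, Polynomial.derivative_X,
      Polynomial.derivative_sub, Polynomial.derivative_one]
    push_cast
    ring

lemma legG_eval0 (m j : ℕ) (hj : j < m) : (derivative^[j] (legG m)).eval 0 = 0 := by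
  obtain ⟨h, hh⟩ := legG_factor m j hj.le
  have : m - j ≠ 0 := by omega
  simp [hh, zero_pow this]

lemma legG_eval1 (m j : ℕ) (hj : j < m) : (derivative^[j] (legG m)).eval 1 = 0 := by
  obtain ⟨h, hh⟩ := legG_factor m j hj.le
  have : m - j ≠ 0 := by omega
  simp [hh, zero_pow this]

lemma legG_orth (m : ℕ) : ∀ s, 1 ≤ s → s ≤ m → ∀ q : Polynomial ℝ, q.natDegree < s →
    ∫ x in (0:ℝ)..1, (q * derivative^[s] (legG m)).eval x = 0 := by
  intro s h1
  induction s, h1 using Nat.le_induction with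
  | base =>
    intro hm q hq
    have hqc : q = C (q.coeff 0) := Polynomial.eq_C_of_natDegree_le_zero (by omega)
    have h0 : (legG m).eval 0 = 0 := legG_eval0 m 0 hm
    have h1' : (legG m).eval 1 = 0 := legG_eval1 m 0 hm
    simp only [Function.iterate_one]
    rw [hqc]
    have := poly_parts (C (q.coeff 0)) (legG m) 0 1
    simpa [h0, h1'] using this
  | succ s hs ih =>
    intro hm q hq
    rw [Function.iterate_succ_apply']
    rw [poly_parts q (derivative^[s] (legG m)) 0 1]
    rw [legG_eval0 m s (by omega), legG_eval1 m s (by omega)]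
    have hd : (derivative q).natDegree < s := by
      have := Polynomial.natDegree_derivative_le q
      omega
    rw [ih (by omega) (derivative q) hd]
    ring

lemma legG_monic (m : ℕ) : (legG m).Monic :=
  ((Polynomial.monic_X).mul (Polynomial.monic_X_sub_C 1)).pow m

lemma legG_natDegree (m : ℕ) : (legG m).natDegree = 2 * m := by
  have h : (X * (X - 1) : Polynomial ℝ).natDegree = 2 := by
    have h1 : (X - 1 : Polynomial ℝ) = X - C 1 := by simp
    rw [Polynomial.natDegree_mul Polynomial.X_ne_zero (by rw [h1]; exact Polynomial.X_sub_C_ne_zero 1)]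
    rw [h1, Polynomial.natDegree_X, Polynomial.natDegree_X_sub_C]
  rw [legG, Polynomial.natDegree_pow, h]; ring

lemma iterate_derivative_add' (P Q : Polynomial ℝ) (k : ℕ) :
    derivative^[k] (P + Q) = derivative^[k] P + derivative^[k] Q := by
  induction k with
  | zero => simp
  | succ k ih => rw [Function.iterate_succ_apply', Function.iterate_succ_apply',
      Function.iterate_succ_apply', ih, Polynomial.derivative_add]

lemma legG_sub_natDegree (m : ℕ) (hm : 1 ≤ m) : (legG m - X ^ (2 * m)).natDegree < 2 * m := by
  rcases eq_or_ne (legG m - X ^ (2 * m)) 0 with h | h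
  · rw [h]; simpa using by omega
  · have hd : (legG m - X ^ (2 * m)).degree < (legG m).degree := by
      apply Polynomial.degree_sub_lt
      · rw [Polynomial.degree_eq_natDegree (legG_monic m).ne_zero, legG_natDegree,
          Polynomial.degree_X_pow]
      · exact (legG_monic m).ne_zero
      · rw [(legG_monic m).leadingCoeff, Polynomial.leadingCoeff_X_pow]
    rw [Polynomial.degree_eq_natDegree (legG_monic m).ne_zero, legG_natDegree] at hd
    exact (Polynomial.natDegree_lt_iff_degree_lt h).2 hd

lemma legG_top_deriv (m : ℕ) :
    derivative^[2 * m] (legG m) = C (((2 * m).factorial : ℝ)) := by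
  rcases Nat.eq_zero_or_pos m with hm | hm
  · subst hm; simp [legG]
  have hsub' : (legG m - X ^ (2 * m)).natDegree < 2 * m := legG_sub_natDegree m hm
  have h1 : legG m = X ^ (2 * m) + (legG m - X ^ (2 * m)) := by ring
  rw [h1, iterate_derivative_add', Polynomial.iterate_derivative_eq_zero hsub',
    Polynomial.iterate_derivative_X_pow_eq_smul]
  simp [Nat.descFactorial_self, Polynomial.smul_eq_C_mul]

lemma beta_int : ∀ (b a : ℕ), ∫ x in (0:ℝ)..1, x ^ a * (1 - x) ^ b
    = (a.factorial * b.factorial : ℝ) / (a + b + 1).factorial := by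
  intro b
  induction b with
  | zero =>
    intro a
    simp only [pow_zero, mul_one, Nat.factorial_zero, Nat.add_zero]
    rw [integral_pow, Nat.factorial_succ]
    push_cast
    have : (a : ℝ) + 1 ≠ 0 := by positivity
    field_simp
    simp
  | succ b ih =>
    intro a
    have hF : ∀ x : ℝ, HasDerivAt (fun x : ℝ => x ^ (a + 1) * (1 - x) ^ (b + 1))
        ((a + 1 : ℝ) * (x ^ a * (1 - x) ^ (b + 1)) - (b + 1 : ℝ) * (x ^ (a + 1) * (1 - x) ^ b)) x := by
      intro x
      have h1 : HasDerivAt (fun x : ℝ => x ^ (a + 1)) ((a + 1 : ℝ) * x ^ a) x := by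
        simpa using hasDerivAt_pow (a + 1) x
      have h2 : HasDerivAt (fun x : ℝ => (1 - x) ^ (b + 1))
          (((b + 1 : ℝ) * (1 - x) ^ b) * (-1)) x := by
        exact ((hasDerivAt_id x).const_sub 1).pow (b+1) |>.congr_deriv (by simp; try ring)
      have := h1.fun_mul h2
      exact this.congr_deriv (by ring)
    have hint : ∫ x in (0:ℝ)..1, ((a + 1 : ℝ) * (x ^ a * (1 - x) ^ (b + 1))
        - (b + 1 : ℝ) * (x ^ (a + 1) * (1 - x) ^ b)) = 0 := by
      rw [intervalIntegral.integral_eq_sub_of_hasDerivAt (fun x _ => hF x)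
        (Continuous.intervalIntegrable (by continuity) _ _)]
      simp
    rw [intervalIntegral.integral_sub (Continuous.intervalIntegrable (by continuity) _ _)
      (Continuous.intervalIntegrable (by continuity) _ _),
      intervalIntegral.integral_const_mul, intervalIntegral.integral_const_mul] at hint
    have h2 := ih (a + 1)
    rw [h2] at hint
    have hfa : ((a : ℝ) + 1) ≠ 0 := by positivity
    rw [show a + (b + 1) + 1 = a + 1 + b + 1 from by ring]
    have hval : (∫ x in (0:ℝ)..1, x ^ a * (1 - x) ^ (b + 1))
        = ((b : ℝ) + 1) * ((↑(a+1).factorial * ↑b.factorial) / ↑(a + 1 + b + 1).factorial) / ((a:ℝ) + 1) := by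
      field_simp at hint ⊢
      linarith
    rw [hval, Nat.factorial_succ a, Nat.factorial_succ b]
    have hfb : ((a + 1 + b + 1).factorial : ℝ) ≠ 0 := by positivity
    push_cast
    field_simp

lemma legG_pair (m : ℕ) : ∀ k, k ≤ m →
    ∫ x in (0:ℝ)..1, (derivative^[m + k] (legG m) * derivative^[m - k] (legG m)).eval x
      = (-1 : ℝ) ^ k *
        ∫ x in (0:ℝ)..1, (derivative^[m] (legG m) * derivative^[m] (legG m)).eval x := by
  intro k
  induction k with
  | zero => intro _; simp
  | succ k ih =>
    intro hk
    have e1 : m - k = (m - (k + 1)) + 1 := by omega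
    have e2 : derivative^[m - k] (legG m) = derivative (derivative^[m - (k+1)] (legG m)) := by
      rw [e1, Function.iterate_succ_apply']
    have h := poly_parts (derivative^[m + k] (legG m)) (derivative^[m - (k+1)] (legG m)) 0 1
    rw [← e2] at h
    rw [legG_eval0 m (m - (k+1)) (by omega), legG_eval1 m (m - (k+1)) (by omega)] at h
    rw [← Function.iterate_succ_apply' derivative (m + k)] at h
    simp only [Nat.succ_eq_add_one] at h
    have e3 : m + k + 1 = m + (k + 1) := by omega
    rw [e3] at h
    rw [ih (by omega)] at h
    have : ∫ x in (0: ℝ)..1, (derivative^[m + (k+1)] (legG m) * derivative^[m - (k+1)] (legG m)).eval x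
        = - ((-1:ℝ)^k * ∫ x in (0:ℝ)..1, (derivative^[m] (legG m) * derivative^[m] (legG m)).eval x) := by
      linarith
    rw [this]; ring

lemma legG_int (m : ℕ) : ∫ x in (0:ℝ)..1, (legG m).eval x
    = (-1 : ℝ) ^ m * ((m.factorial * m.factorial : ℝ) / (m + m + 1).factorial) := by
  have hev : ∀ x : ℝ, (legG m).eval x = (-1 : ℝ) ^ m * (x ^ m * (1 - x) ^ m) := by
    intro x
    simp only [legG, Polynomial.eval_pow, Polynomial.eval_mul, Polynomial.eval_sub,
      Polynomial.eval_X, Polynomial.eval_one]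
    rw [show x * (x - 1) = -(x * (1 - x)) by ring, neg_pow, mul_pow]
  simp_rw [hev]
  rw [intervalIntegral.integral_const_mul, beta_int m m]

lemma legW_normsq (m : ℕ) (hm : 1 ≤ m) :
    ∫ x in (0:ℝ)..1, (derivative^[m] (legG m) * derivative^[m] (legG m)).eval x
      = (m.factorial : ℝ) ^ 2 / (2 * m + 1) := by
  have h := legG_pair m m le_rfl
  rw [Nat.sub_self, Function.iterate_zero_apply, show m + m = 2 * m from by ring,
    legG_top_deriv m] at h
  have hC : ∀ x : ℝ, (C (((2*m).factorial : ℝ)) * legG m).eval x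
      = ((2*m).factorial : ℝ) * (legG m).eval x := by intro x; simp
  simp_rw [hC] at h
  rw [intervalIntegral.integral_const_mul, legG_int m] at h
  set I := ∫ x in (0:ℝ)..1, (derivative^[m] (legG m) * derivative^[m] (legG m)).eval x with hI
  set Q : ℝ := (m.factorial * m.factorial : ℝ) / (m + m + 1).factorial with hQ
  have hone : (-1 : ℝ) ^ m * (-1) ^ m = 1 := by
    rw [← pow_add, show m + m = 2 * m from by ring, pow_mul]; norm_num
  have hIeq : I = ((2*m).factorial : ℝ) * Q := by
    have h1 : (-1:ℝ)^m * (((2*m).factorial : ℝ) * ((-1)^m * Q)) = (-1:ℝ)^m * ((-1)^m * I) := by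
      rw [h]
    calc I = ((-1:ℝ)^m * (-1)^m) * I := by rw [hone, one_mul]
    _ = (-1:ℝ)^m * (((2*m).factorial : ℝ) * ((-1)^m * Q)) := by rw [mul_assoc, ← h1]
    _ = ((-1:ℝ)^m * (-1)^m) * (((2*m).factorial : ℝ) * Q) := by ring
    _ = ((2*m).factorial : ℝ) * Q := by rw [hone, one_mul]
  have hfac : ((m + m + 1).factorial : ℝ) = (2 * m + 1) * (2 * m).factorial := by
    rw [show m + m + 1 = (2 * m) + 1 from by ring, Nat.factorial_succ]
    push_cast; ring
  have h2 : ((2*m).factorial : ℝ) ≠ 0 := by positivity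
  have h3 : (2 * (m:ℝ) + 1) ≠ 0 := by positivity
  rw [hIeq, hQ, hfac]
  push_cast
  field_simp

lemma scale_int (n : ℕ) (j : ℕ) (hn : 1 ≤ n) (f : ℝ → ℝ) :
    ∫ x in ((j:ℝ)/n)..(((j:ℝ)+1)/n), f ((n:ℝ) * x - j) = (n:ℝ)⁻¹ * ∫ u in (0:ℝ)..1, f u := by
  have hc : (n : ℝ) ≠ 0 := by positivity
  have h := intervalIntegral.integral_comp_mul_sub f hc (j : ℝ) (a := ((j:ℝ)/n)) (b := (((j:ℝ)+1)/n))
  have e0 : (n:ℝ) * ((j:ℝ)/n) - j = 0 := by field_simp; ring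
  have e1 : (n:ℝ) * (((j:ℝ)+1)/n) - j = 1 := by field_simp; ring
  rw [e0, e1] at h
  rw [h, smul_eq_mul]

lemma piece_int_eq (g : ℝ → ℝ) (q : Polynomial ℝ) (a b : ℝ)
    (hg : ∀ x ∈ Ico a b, g x = q.eval x) :
    ∫ x in Ioo a b, g x = ∫ x in Ioo a b, q.eval x :=
  setIntegral_congr_fun measurableSet_Ioo (fun x hx => hg x ⟨hx.1.le, hx.2⟩)

lemma piece_integrable (g : ℝ → ℝ) (q : Polynomial ℝ) (a b : ℝ) (hab : a ≤ b)
    (hg : ∀ x ∈ Ico a b, g x = q.eval x) :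
    IntervalIntegrable g volume a b := by
  rw [intervalIntegrable_iff_integrableOn_Ioc_of_le hab]
  have h1 : IntegrableOn (fun x => q.eval x) (Ioo a b) volume :=
    (q.continuous.integrableOn_Icc).mono_set Ioo_subset_Icc_self
  have h2 : IntegrableOn g (Ioo a b) volume := by
    apply h1.congr_fun (fun x hx => (hg x ⟨hx.1.le, hx.2⟩).symm) measurableSet_Ioo
  exact h2.congr_set_ae MeasureTheory.Ioo_ae_eq_Ioc.symm

lemma pw_sum (n : ℕ) (hn : 1 ≤ n) (g : ℝ → ℝ) (q : ℕ → Polynomial ℝ)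
    (hgq : ∀ j, j < n → ∀ x ∈ Ico ((j:ℝ)/n) (((j:ℝ)+1)/n), g x = (q j).eval x) :
    ∫ x in Ioo (0:ℝ) 1, g x
      = ∑ j ∈ Finset.range n, ∫ x in ((j:ℝ)/n)..(((j:ℝ)+1)/n), (q j).eval x := by
  have hnR : (0:ℝ) < n := by positivity
  set a : ℕ → ℝ := fun k => (k:ℝ)/n with ha
  have hcast : ∀ k : ℕ, a (k+1) = ((k:ℝ)+1)/n := by intro k; simp [ha]
  have hmono : ∀ k : ℕ, a k ≤ a (k+1) := by
    intro k
    rw [hcast]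
    show (k:ℝ)/n ≤ ((k:ℝ)+1)/n
    gcongr
    linarith
  have hint : ∀ k < n, IntervalIntegrable g volume (a k) (a (k+1)) := by
    intro k hk
    have := piece_integrable g (q k) (a k) (a (k+1)) (hmono k)
      (by rw [hcast]; exact hgq k hk)
    rwa [hcast] at this ⊢
  have h0 : a 0 = 0 := by simp [ha]
  have h1 : a n = 1 := by
    simp only [ha]; field_simp
  have hsum := intervalIntegral.sum_integral_adjacent_intervals hint
  rw [h0, h1] at hsum
  have hIoo : ∫ x in Ioo (0:ℝ) 1, g x = ∫ x in (0:ℝ)..1, g x := by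
    rw [intervalIntegral.integral_of_le zero_le_one, MeasureTheory.integral_Ioc_eq_integral_Ioo]
  rw [hIoo, ← hsum]
  apply Finset.sum_congr rfl
  intro j hj
  have hj' : j < n := Finset.mem_range.mp hj
  have hEq : ∫ x in (a j)..(a (j+1)), g x = ∫ x in (a j)..(a (j+1)), (q j).eval x := by
    rw [intervalIntegral.integral_of_le (hmono j), intervalIntegral.integral_of_le (hmono j),
      MeasureTheory.integral_Ioc_eq_integral_Ioo, MeasureTheory.integral_Ioc_eq_integral_Ioo]
    exact piece_int_eq g (q j) (a j) (a (j+1)) (by rw [hcast]; exact hgq j hj')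
  rw [hEq, hcast]

/-- Membership in the space `S^p_{−1,n}` of (discontinuous) piecewise polynomials of degree at
most `p` on the uniform partition of `[0,1)` into `n` intervals `[j/n,(j+1)/n)`. -/
def IsPiecewisePoly (p n : ℕ) (g : ℝ → ℝ) : Prop :=
  ∀ j < n, ∃ q : Polynomial ℝ, q.natDegree ≤ p ∧
    ∀ x ∈ Set.Ico ((j : ℝ) / n) (((j : ℝ) + 1) / n), g x = q.eval x

lemma poly_int_smul (c : ℝ) (P : Polynomial ℝ) (a b : ℝ) :
    ∫ x in a..b, (C c * P).eval x = c * ∫ x in a..b, P.eval x := by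
  simp_rw [Polynomial.eval_mul, Polynomial.eval_C]
  exact intervalIntegral.integral_const_mul c _

lemma iterated_poly (P : Polynomial ℝ) (k : ℕ) :
    iteratedDeriv k (fun y : ℝ => P.eval y) = fun y => (derivative^[k] P).eval y := by
  induction k with
  | zero => simp
  | succ k ih =>
    rw [iteratedDeriv_succ, ih, Function.iterate_succ_apply']
    funext y
    exact Polynomial.deriv _

lemma iterated_monomial (m : ℕ) :
    iteratedDeriv m (fun y : ℝ => y ^ m) = fun _ => (m.factorial : ℝ) := by
  have h : (fun y : ℝ => y ^ m) = fun y : ℝ => (X ^ m : Polynomial ℝ).eval y := by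
    funext y; simp
  rw [h, iterated_poly, Polynomial.iterate_derivative_X_pow_eq_smul]
  funext y
  simp [Nat.descFactorial_self, Polynomial.smul_eq_C_mul]

-- the piecewise error polynomial
noncomputable def Epoly (m n j : ℕ) : Polynomial ℝ :=
  C ((m.factorial : ℝ) / (2*m).factorial * ((n:ℝ)^m)⁻¹) *
    ((derivative^[m] (legG m)).comp (C (n:ℝ) * X - C (j:ℝ)))

noncomputable def sfam (m n j : ℕ) : Polynomial ℝ := X ^ m - Epoly m n j

lemma W_split (m : ℕ) (hm : 1 ≤ m) :
    derivative^[m] (legG m)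
      = (((2*m).descFactorial m : ℝ)) • X ^ m + derivative^[m] (legG m - X ^ (2*m)) := by
  have h1 : legG m = X ^ (2 * m) + (legG m - X ^ (2 * m)) := by ring
  conv_lhs => rw [h1]
  rw [iterate_derivative_add', Polynomial.iterate_derivative_X_pow_eq_smul,
    show 2 * m - m = m from by omega]

lemma Wr_natDegree (m : ℕ) (hm : 1 ≤ m) :
    (derivative^[m] (legG m - X ^ (2*m))).natDegree < m := by
  have h := Polynomial.natDegree_iterate_derivative (legG m - X ^ (2*m)) m
  have h2 := legG_sub_natDegree m hm
  omega

lemma hkd_one (m n : ℕ) (hn : 1 ≤ n) :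
    (m.factorial : ℝ) / (2*m).factorial * ((n:ℝ)^m)⁻¹ * (((2*m).descFactorial m : ℝ) * (n:ℝ)^m)
      = 1 := by
  have hfac : (m.factorial : ℝ) * ((2*m).descFactorial m : ℝ) = ((2*m).factorial : ℝ) := by
    rw [← Nat.cast_mul]
    congr 1
    have := Nat.factorial_mul_descFactorial (show m ≤ 2*m by omega)
    rw [show 2*m - m = m from by omega] at this
    exact this
  have h1 : ((2*m).factorial : ℝ) ≠ 0 := by positivity
  have h2 : ((n:ℝ)^m) ≠ 0 := by positivity
  field_simp
  nlinarith [hfac, pow_pos (show (0:ℝ) < n by positivity) m]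

lemma Epoly_split (m n j : ℕ) (hm : 1 ≤ m) (hn : 1 ≤ n) :
    Epoly m n j = (X - C ((j:ℝ)/n)) ^ m
      + C ((m.factorial : ℝ) / (2*m).factorial * ((n:ℝ)^m)⁻¹) *
        ((derivative^[m] (legG m - X ^ (2*m))).comp (C (n:ℝ) * X - C (j:ℝ))) := by
  have hn0 : (n:ℝ) ≠ 0 := by positivity
  have hlin : C (n:ℝ) * X - C (j:ℝ) = C (n:ℝ) * (X - C ((j:ℝ)/n)) := by
    rw [mul_sub, ← Polynomial.C_mul]
    congr 2
    field_simp
  rw [Epoly, W_split m hm, Polynomial.add_comp, Polynomial.smul_comp, Polynomial.pow_comp,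
    Polynomial.X_comp, mul_add]
  congr 1
  rw [hlin, mul_pow, ← Polynomial.C_pow, Polynomial.smul_eq_C_mul, ← mul_assoc, ← mul_assoc,
    ← Polynomial.C_mul, ← Polynomial.C_mul, mul_assoc, hkd_one m n hn, Polynomial.C_1, one_mul]

lemma lin_natDegree (n j : ℕ) : (C (n:ℝ) * X - C (j:ℝ)).natDegree ≤ 1 := by
  apply le_trans (Polynomial.natDegree_sub_le _ _)
  apply max_le
  · exact le_trans (Polynomial.natDegree_C_mul_le _ _) (by simp)
  · simp

lemma sfam_natDegree (m n j : ℕ) (hm : 1 ≤ m) (hn : 1 ≤ n) :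
    (sfam m n j).natDegree ≤ m - 1 := by
  rw [sfam, Epoly_split m n j hm hn]
  have h1 : (X ^ m - (X - C ((j:ℝ)/n)) ^ m).natDegree ≤ m - 1 := by
    rcases eq_or_ne (X ^ m - (X - C ((j:ℝ)/n)) ^ m : Polynomial ℝ) 0 with h | h
    · rw [h]; simp
    · have hd : (X ^ m - (X - C ((j:ℝ)/n)) ^ m : Polynomial ℝ).degree < (X ^ m : Polynomial ℝ).degree := by
        apply Polynomial.degree_sub_lt
        · rw [Polynomial.degree_X_pow,
            Polynomial.degree_eq_natDegree (((Polynomial.monic_X_sub_C _).pow m).ne_zero),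
            Polynomial.natDegree_pow, Polynomial.natDegree_X_sub_C, mul_one]
        · exact pow_ne_zero m Polynomial.X_ne_zero
        · rw [Polynomial.leadingCoeff_X_pow, ((Polynomial.monic_X_sub_C _).pow m).leadingCoeff]
      rw [Polynomial.degree_X_pow] at hd
      have := (Polynomial.natDegree_lt_iff_degree_lt h).2 hd
      omega
  have h2 : (C ((m.factorial : ℝ) / (2*m).factorial * ((n:ℝ)^m)⁻¹) *
        ((derivative^[m] (legG m - X ^ (2*m))).comp (C (n:ℝ) * X - C (j:ℝ)))).natDegree ≤ m - 1 := by
    apply le_trans (Polynomial.natDegree_C_mul_le _ _)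
    apply le_trans (Polynomial.natDegree_comp_le)
    have h3 := Wr_natDegree m hm
    have h4 := lin_natDegree n j
    calc (derivative^[m] (legG m - X ^ (2*m))).natDegree * (C (n:ℝ) * X - C (j:ℝ)).natDegree
        ≤ (m - 1) * 1 := Nat.mul_le_mul (by omega) h4
    _ = m - 1 := by omega
  calc (X ^ m - ((X - C ((j:ℝ)/n)) ^ m
      + C ((m.factorial : ℝ) / (2*m).factorial * ((n:ℝ)^m)⁻¹) *
        ((derivative^[m] (legG m - X ^ (2*m))).comp (C (n:ℝ) * X - C (j:ℝ))))).natDegree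
      = ((X ^ m - (X - C ((j:ℝ)/n)) ^ m)
        - C ((m.factorial : ℝ) / (2*m).factorial * ((n:ℝ)^m)⁻¹) *
          ((derivative^[m] (legG m - X ^ (2*m))).comp (C (n:ℝ) * X - C (j:ℝ)))).natDegree := by
        ring_nf
  _ ≤ max _ _ := Polynomial.natDegree_sub_le _ _
  _ ≤ m - 1 := max_le h1 h2

lemma Epoly_eval (m n j : ℕ) (x : ℝ) :
    (Epoly m n j).eval x = ((m.factorial : ℝ) / (2*m).factorial * ((n:ℝ)^m)⁻¹) *
      (derivative^[m] (legG m)).eval ((n:ℝ) * x - j) := by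
  simp [Epoly, Polynomial.eval_comp]

-- per-interval orthogonality of the explicit error
lemma Epoly_orth (m n j : ℕ) (hm : 1 ≤ m) (hn : 1 ≤ n) (t : Polynomial ℝ)
    (ht : t.natDegree < m) :
    ∫ x in ((j:ℝ)/n)..(((j:ℝ)+1)/n), (Epoly m n j).eval x * t.eval x = 0 := by
  have hn0 : (n:ℝ) ≠ 0 := by positivity
  set k : ℝ := (m.factorial : ℝ) / (2*m).factorial * ((n:ℝ)^m)⁻¹ with hk
  set tc : Polynomial ℝ := t.comp (C ((n:ℝ))⁻¹ * (X + C (j:ℝ))) with htc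
  have hpt : ∀ x : ℝ, (Epoly m n j).eval x * t.eval x
      = (fun u => k * (tc * derivative^[m] (legG m)).eval u) ((n:ℝ) * x - j) := by
    intro x
    rw [Epoly_eval]
    simp only [htc, Polynomial.eval_mul, Polynomial.eval_comp, Polynomial.eval_add,
      Polynomial.eval_C, Polynomial.eval_X]
    have hx : ((n:ℝ))⁻¹ * ((n:ℝ) * x - j + j) = x := by field_simp; ring
    rw [hx]
    ring
  simp_rw [hpt]
  have hsc := scale_int n j hn (fun u => k * (tc * derivative^[m] (legG m)).eval u)
  rw [hsc, intervalIntegral.integral_const_mul]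
  have hdeg : tc.natDegree < m := by
    apply lt_of_le_of_lt (Polynomial.natDegree_comp_le)
    have h1 : (C ((n:ℝ))⁻¹ * (X + C (j:ℝ))).natDegree ≤ 1 :=
      le_trans (Polynomial.natDegree_C_mul_le _ _) (by simpa using Polynomial.natDegree_add_le X (C (j:ℝ)))
    calc t.natDegree * (C ((n:ℝ))⁻¹ * (X + C (j:ℝ))).natDegree ≤ t.natDegree * 1 :=
          Nat.mul_le_mul_left _ h1
    _ = t.natDegree := by omega
    _ < m := ht
  rw [legG_orth m m hm le_rfl tc hdeg, mul_zero, mul_zero]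

-- per-interval squared norm of the explicit error
lemma Epoly_normsq (m n j : ℕ) (hm : 1 ≤ m) (hn : 1 ≤ n) :
    ∫ x in ((j:ℝ)/n)..(((j:ℝ)+1)/n), ((Epoly m n j).eval x) ^ 2
      = (n:ℝ)⁻¹ * (((m.factorial : ℝ) / (2*m).factorial * ((n:ℝ)^m)⁻¹)^2
          * ((m.factorial : ℝ) ^ 2 / (2 * m + 1))) := by
  set k : ℝ := (m.factorial : ℝ) / (2*m).factorial * ((n:ℝ)^m)⁻¹ with hk
  have hpt : ∀ x : ℝ, ((Epoly m n j).eval x) ^ 2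
      = (fun u => k ^ 2 * (derivative^[m] (legG m) * derivative^[m] (legG m)).eval u)
          ((n:ℝ) * x - j) := by
    intro x
    rw [Epoly_eval]
    simp only [Polynomial.eval_mul]
    ring
  simp_rw [hpt]
  have hsc := scale_int n j hn
    (fun u => k ^ 2 * (derivative^[m] (legG m) * derivative^[m] (legG m)).eval u)
  rw [hsc, intervalIntegral.integral_const_mul, legW_normsq m hm]

/-- If `Pf` is the `L²(0,1)` orthogonal projection of `f(x) = x^(p+1)` onto the space of
discontinuous piecewise polynomials of degree `≤ p` on the uniform `n`-partition (characterized
by `Pf` lying in the space and `f − Pf` being `L²`-orthogonal to the space), then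
`‖f − Pf‖ = ((p+1)!/((2p+2)!√(2p+3))) n^(−(p+1)) ‖f⁽ᵖ⁺¹⁾‖`. -/
theorem dg_projection_error_of_monomial (p n : ℕ) (hn : 1 ≤ n) (Pf : ℝ → ℝ)
    (hmem : IsPiecewisePoly p n Pf)
    (horth : ∀ g : ℝ → ℝ, IsPiecewisePoly p n g →
      ∫ x in Set.Ioo (0 : ℝ) 1, (x ^ (p + 1) - Pf x) * g x = 0) :
    Real.sqrt (∫ x in Set.Ioo (0 : ℝ) 1, (x ^ (p + 1) - Pf x) ^ 2) =
      (Nat.factorial (p + 1) : ℝ) /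
          ((Nat.factorial (2 * p + 2) : ℝ) * Real.sqrt (2 * (p : ℝ) + 3)) *
        (n : ℝ) ^ (-(p : ℤ) - 1) *
        Real.sqrt (∫ x in Set.Ioo (0 : ℝ) 1,
          (iteratedDeriv (p + 1) (fun y : ℝ => y ^ (p + 1)) x) ^ 2) := by
  classical
  set m := p + 1 with hmdef
  have hm : 1 ≤ m := by omega
  have hnR : (0:ℝ) < n := by positivity
  set k : ℝ := (m.factorial : ℝ) / (2*m).factorial * ((n:ℝ)^m)⁻¹ with hk
  have hk0 : 0 ≤ k := by positivity
  choose! r hrdeg hrval using hmem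
  -- floor identification
  have hfloor : ∀ j, j < n → ∀ x ∈ Ico ((j:ℝ)/n) (((j:ℝ)+1)/n),
      (⌊x * (n:ℝ)⌋).toNat = j := by
    intro j hj x hx
    have h1 : (j:ℝ) ≤ x * n := by
      have := (div_le_iff₀ hnR).mp hx.1
      linarith
    have h2 : x * n < (j:ℝ) + 1 := by
      have := (lt_div_iff₀ hnR).mp hx.2
      linarith
    have hfl : ⌊x * (n:ℝ)⌋ = (j:ℤ) := by
      rw [Int.floor_eq_iff]
      constructor
      · exact_mod_cast h1
      · push_cast; exact h2
    rw [hfl]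
    simp
  set Qfun : ℝ → ℝ := fun x => (sfam m n (⌊x * (n:ℝ)⌋).toNat).eval x with hQfun
  have hQval : ∀ j, j < n → ∀ x ∈ Ico ((j:ℝ)/n) (((j:ℝ)+1)/n),
      Qfun x = (sfam m n j).eval x := by
    intro j hj x hx
    rw [hQfun]
    simp only
    rw [hfloor j hj x hx]
  have hsdeg : ∀ j : ℕ, (sfam m n j).natDegree ≤ p := by
    intro j
    have := sfam_natDegree m n j hm hn
    omega
  -- orthogonality hypothesis applied to Qfun - Pf
  have hQpw : IsPiecewisePoly p n (fun x => Qfun x - Pf x) := by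
    intro j hj
    refine ⟨sfam m n j - r j, ?_, ?_⟩
    · exact le_trans (Polynomial.natDegree_sub_le _ _) (max_le (hsdeg j) (hrdeg j hj))
    · intro x hx
      show Qfun x - Pf x = _
      rw [hQval j hj x hx, hrval j hj x hx, Polynomial.eval_sub]
  have hC := horth _ hQpw
  -- rewrite both global integrals as sums of interval integrals of polynomials
  have hCsum : ∑ j ∈ Finset.range n,
      ∫ x in ((j:ℝ)/n)..(((j:ℝ)+1)/n), ((X^m - r j) * (sfam m n j - r j)).eval x = 0 := by
    rw [← pw_sum n hn (fun x => (x ^ m - Pf x) * (Qfun x - Pf x))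
      (fun j => (X^m - r j) * (sfam m n j - r j)) ?_]
    · exact hC
    · intro j hj x hx
      show (x ^ m - Pf x) * (Qfun x - Pf x) = _
      rw [hQval j hj x hx, hrval j hj x hx]
      simp
  have hAsum : (∫ x in Set.Ioo (0:ℝ) 1, (x ^ m - Pf x) ^ 2)
      = ∑ j ∈ Finset.range n,
        ∫ x in ((j:ℝ)/n)..(((j:ℝ)+1)/n), ((X^m - r j) * (X^m - r j)).eval x := by
    apply pw_sum n hn (fun x => (x ^ m - Pf x) ^ 2) (fun j => (X^m - r j) * (X^m - r j))
    intro j hj x hx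
    show (x ^ m - Pf x) ^ 2 = _
    rw [hrval j hj x hx]
    simp [sq]
  -- per-interval identities
  have hper : ∀ j, j < n →
      (∫ x in ((j:ℝ)/n)..(((j:ℝ)+1)/n), ((X^m - r j) * (X^m - r j)).eval x)
        = (∫ x in ((j:ℝ)/n)..(((j:ℝ)+1)/n), ((Epoly m n j) * (Epoly m n j)).eval x)
          + ∫ x in ((j:ℝ)/n)..(((j:ℝ)+1)/n), ((X^m - r j) * (sfam m n j - r j)).eval x := by
    intro j hj
    set d : Polynomial ℝ := sfam m n j - r j with hd
    have hXm : (X^m - r j : Polynomial ℝ) = Epoly m n j + d := by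
      rw [hd, sfam]; ring
    have hddeg : d.natDegree < m :=
      lt_of_le_of_lt (le_trans (Polynomial.natDegree_sub_le _ _)
        (max_le (hsdeg j) (hrdeg j hj))) (by omega)
    have hO : ∫ x in ((j:ℝ)/n)..(((j:ℝ)+1)/n), ((Epoly m n j) * d).eval x = 0 := by
      have := Epoly_orth m n j hm hn d hddeg
      simpa [Polynomial.eval_mul] using this
    have e1 : ((X^m - r j) * (X^m - r j) : Polynomial ℝ)
        = (Epoly m n j) * (Epoly m n j) + ((Epoly m n j) * d + (d * d + (Epoly m n j) * d)) := by
      rw [hXm]; ring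
    have e2 : ((X^m - r j) * (sfam m n j - r j) : Polynomial ℝ)
        = (Epoly m n j) * d + d * d := by
      rw [← hd, hXm]; ring
    rw [e1, e2, poly_int_add, poly_int_add, poly_int_add, poly_int_add, hO]
    ring
  -- sum up
  have hEsum : ∑ j ∈ Finset.range n,
      ∫ x in ((j:ℝ)/n)..(((j:ℝ)+1)/n), ((Epoly m n j) * (Epoly m n j)).eval x
        = k^2 * ((m.factorial : ℝ)^2 / (2*(m:ℝ)+1)) := by
    have hval : ∀ j ∈ Finset.range n,
        (∫ x in ((j:ℝ)/n)..(((j:ℝ)+1)/n), ((Epoly m n j) * (Epoly m n j)).eval x)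
          = (n:ℝ)⁻¹ * (k^2 * ((m.factorial : ℝ)^2 / (2*(m:ℝ)+1))) := by
      intro j _
      have := Epoly_normsq m n j hm hn
      rw [hk]
      rw [← this]
      apply intervalIntegral.integral_congr
      intro x _
      simp [Polynomial.eval_mul, sq]
    rw [Finset.sum_congr rfl hval, Finset.sum_const, Finset.card_range, nsmul_eq_mul]
    have : (n:ℝ) ≠ 0 := by positivity
    field_simp
  have hA : (∫ x in Set.Ioo (0:ℝ) 1, (x ^ m - Pf x) ^ 2)
      = k^2 * ((m.factorial : ℝ)^2 / (2*(m:ℝ)+1)) := by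
    rw [hAsum, Finset.sum_congr rfl (fun j hj => hper j (Finset.mem_range.mp hj)),
      Finset.sum_add_distrib, hCsum, add_zero, hEsum]
  -- right-hand side ingredients
  have hIter : (∫ x in Set.Ioo (0:ℝ) 1,
      (iteratedDeriv m (fun y : ℝ => y ^ m) x) ^ 2) = (m.factorial : ℝ)^2 := by
    rw [iterated_monomial m]
    rw [MeasureTheory.setIntegral_const]
    simp [Real.volume_Ioo]
  have h2m1 : (0:ℝ) < 2*(m:ℝ)+1 := by positivity
  have hzpow : (n:ℝ) ^ (-(p:ℤ) - 1) = ((n:ℝ)^m)⁻¹ := by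
    rw [show (-(p:ℤ) - 1) = -(m:ℤ) from by push_cast [hmdef]; ring, zpow_neg, zpow_natCast]
  have hsq3 : (2*(p:ℝ)+3) = 2*(m:ℝ)+1 := by push_cast [hmdef]; ring
  have hfac2 : ((2*p+2).factorial : ℝ) = ((2*m).factorial : ℝ) := by
    rw [show 2*p+2 = 2*m from by omega]
  rw [hA, hIter, hzpow, hsq3, hfac2]
  rw [show k^2 * ((m.factorial : ℝ)^2 / (2*(m:ℝ)+1))
      = (k * (m.factorial : ℝ) / Real.sqrt (2*(m:ℝ)+1))^2 from by
    rw [div_pow, Real.sq_sqrt h2m1.le]; ring]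
  rw [Real.sqrt_sq (by positivity), Real.sqrt_sq (by positivity)]
  have hs0 : Real.sqrt (2*(m:ℝ)+1) ≠ 0 := by positivity
  have hf0 : ((2*m).factorial : ℝ) ≠ 0 := by positivity
  rw [hk]
  field_simp
end

section
/- For all real r ≥ 1, √(2π) · r^{r+1/2} · e^{−r} · e^{1/(12r+1)} ≤ Γ(r+1) ≤ √(2π) · r^{r+1/2} · e^{−r} · e^{1/(12r)}; in particular for natural numbers r ≥ 1 the same bounds hold for r!. -/
open Real Set

namespace Robbins

lemma hasDerivAt_phi {t : ℝ} (h1 : -1 < t) (h2 : t < 1) :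
    HasDerivAt (fun u : ℝ => 2*u + 2*u^3/(3*(1-u^2)) - (Real.log (1+u) - Real.log (1-u)))
      (4*t^4/(3*(1-t^2)^2)) t := by
  have hp : (0:ℝ) < 1 + t := by linarith
  have hm : (0:ℝ) < 1 - t := by linarith
  have hden : 3*(1-t^2) ≠ 0 := by nlinarith
  have hA : HasDerivAt (fun u : ℝ => Real.log (1+u)) (1/(1+t)) t := by
    simpa using (HasDerivAt.log ((hasDerivAt_id t).const_add 1) hp.ne')
  have hB : HasDerivAt (fun u : ℝ => Real.log (1-u)) (-1/(1-t)) t := by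
    simpa using (HasDerivAt.log ((hasDerivAt_id t).const_sub 1) hm.ne')
  have hnum : HasDerivAt (fun u : ℝ => 2*u^3) (2*(3*t^2)) t :=
    (hasDerivAt_pow 3 t).const_mul 2 |>.congr_deriv (by ring)
  have hden' : HasDerivAt (fun u : ℝ => 3*(1-u^2)) (3*(-(2*t))) t := by
    have := ((hasDerivAt_pow 2 t).const_sub 1).const_mul 3
    simpa using this.congr_deriv (by ring)
  have hq : HasDerivAt (fun u : ℝ => 2*u^3/(3*(1-u^2)))
      ((2*(3*t^2)*(3*(1-t^2)) - 2*t^3*(3*(-(2*t))))/(3*(1-t^2))^2) t :=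
    hnum.div hden' hden
  have hlin : HasDerivAt (fun u : ℝ => 2*u) 2 t := by
    simpa using (hasDerivAt_id t).const_mul 2
  have := (hlin.add hq).sub (hA.sub hB)
  refine this.congr_deriv ?_
  have hne1 : (1:ℝ)+t ≠ 0 := hp.ne'
  have hne2 : (1:ℝ)-t ≠ 0 := hm.ne'
  have hne3 : (1:ℝ)-t^2 ≠ 0 := by nlinarith
  field_simp
  ring
end Robbins

namespace Robbins
lemma hasDerivAt_psi {t : ℝ} (h1 : -1 < t) (h2 : t < 1) :
    HasDerivAt (fun u : ℝ => (Real.log (1+u) - Real.log (1-u)) - (2*u + 2*u^3/(3-u^2)))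
      (8*t^4/((1-t^2)*(3-t^2)^2)) t := by
  have hp : (0:ℝ) < 1 + t := by linarith
  have hm : (0:ℝ) < 1 - t := by linarith
  have hden : (3:ℝ)-t^2 ≠ 0 := by nlinarith
  have hA : HasDerivAt (fun u : ℝ => Real.log (1+u)) (1/(1+t)) t := by
    simpa using (HasDerivAt.log ((hasDerivAt_id t).const_add 1) hp.ne')
  have hB : HasDerivAt (fun u : ℝ => Real.log (1-u)) (-1/(1-t)) t := by
    simpa using (HasDerivAt.log ((hasDerivAt_id t).const_sub 1) hm.ne')
  have hnum : HasDerivAt (fun u : ℝ => 2*u^3) (2*(3*t^2)) t :=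
    (hasDerivAt_pow 3 t).const_mul 2 |>.congr_deriv (by ring)
  have hden' : HasDerivAt (fun u : ℝ => 3-u^2) (-(2*t)) t := by
    simpa using ((hasDerivAt_pow 2 t).const_sub 3).congr_deriv (by ring)
  have hq : HasDerivAt (fun u : ℝ => 2*u^3/(3-u^2))
      ((2*(3*t^2)*(3-t^2) - 2*t^3*(-(2*t)))/(3-t^2)^2) t := hnum.div hden' hden
  have hlin : HasDerivAt (fun u : ℝ => 2*u) 2 t := by
    simpa using (hasDerivAt_id t).const_mul 2
  have := (hA.sub hB).sub (hlin.add hq)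
  refine this.congr_deriv ?_
  have hne1 : (1:ℝ)+t ≠ 0 := hp.ne'
  have hne2 : (1:ℝ)-t ≠ 0 := hm.ne'
  have hne3 : (1:ℝ)-t^2 ≠ 0 := by nlinarith
  field_simp
  ring

lemma log_upper {t : ℝ} (h0 : 0 ≤ t) (h1 : t < 1) :
    Real.log (1+t) - Real.log (1-t) ≤ 2*t + 2*t^3/(3*(1-t^2)) := by
  set φ : ℝ → ℝ := fun u => 2*u + 2*u^3/(3*(1-u^2)) - (Real.log (1+u) - Real.log (1-u)) with hφ
  have key : ∀ x ∈ Set.Ico (0:ℝ) 1, HasDerivAt φ (4*x^4/(3*(1-x^2)^2)) x := by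
    intro x hx
    exact hasDerivAt_phi (by linarith [hx.1]) hx.2
  have hmono : MonotoneOn φ (Set.Ico (0:ℝ) 1) := by
    apply monotoneOn_of_deriv_nonneg (convex_Ico 0 1)
    · exact fun x hx => (key x hx).continuousAt.continuousWithinAt
    · intro x hx
      rw [interior_Ico] at hx
      exact (key x ⟨hx.1.le, hx.2⟩).differentiableAt.differentiableWithinAt
    · intro x hx
      rw [interior_Ico] at hx
      rw [(key x ⟨hx.1.le, hx.2⟩).deriv]
      have : (0:ℝ) < 1-x^2 := by nlinarith [hx.1, hx.2]
      positivity
  have h00 : φ 0 = 0 := by simp [hφ]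
  have := hmono (Set.mem_Ico.2 ⟨le_refl 0, one_pos⟩) (Set.mem_Ico.2 ⟨h0, h1⟩) h0
  rw [h00] at this
  simp only [hφ] at this
  linarith

lemma log_lower {t : ℝ} (h0 : 0 ≤ t) (h1 : t < 1) :
    2*t + 2*t^3/(3-t^2) ≤ Real.log (1+t) - Real.log (1-t) := by
  set ψ : ℝ → ℝ := fun u => (Real.log (1+u) - Real.log (1-u)) - (2*u + 2*u^3/(3-u^2)) with hψ
  have key : ∀ x ∈ Set.Ico (0:ℝ) 1, HasDerivAt ψ (8*x^4/((1-x^2)*(3-x^2)^2)) x := by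
    intro x hx
    exact hasDerivAt_psi (by linarith [hx.1]) hx.2
  have hmono : MonotoneOn ψ (Set.Ico (0:ℝ) 1) := by
    apply monotoneOn_of_deriv_nonneg (convex_Ico 0 1)
    · exact fun x hx => (key x hx).continuousAt.continuousWithinAt
    · intro x hx
      rw [interior_Ico] at hx
      exact (key x ⟨hx.1.le, hx.2⟩).differentiableAt.differentiableWithinAt
    · intro x hx
      rw [interior_Ico] at hx
      rw [(key x ⟨hx.1.le, hx.2⟩).deriv]
      have h2 : (0:ℝ) < 1-x^2 := by nlinarith [hx.1, hx.2]
      have h3 : (0:ℝ) < 3-x^2 := by nlinarith [hx.1, hx.2]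
      positivity
  have h00 : ψ 0 = 0 := by simp [hψ]
  have := hmono (Set.mem_Ico.2 ⟨le_refl 0, one_pos⟩) (Set.mem_Ico.2 ⟨h0, h1⟩) h0
  rw [h00] at this
  simp only [hψ] at this
  linarith
end Robbins

namespace Robbins

noncomputable def gg (x : ℝ) : ℝ := (x + 1/2) * (Real.log (x+1) - Real.log x) - 1

lemma gg_bounds {x : ℝ} (hx : 0 < x) :
    1/(12*x^2+12*x+2) ≤ gg x ∧ gg x ≤ 1/(12*x*(x+1)) := by
  have h21 : (0:ℝ) < 2*x+1 := by linarith
  set t : ℝ := 1/(2*x+1) with ht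
  have ht0 : 0 < t := by positivity
  have ht1 : t < 1 := by
    rw [ht, div_lt_one h21]; linarith
  have hlog : Real.log (x+1) - Real.log x = Real.log (1+t) - Real.log (1-t) := by
    have e1 : (1:ℝ)+t = (2*x+2)/(2*x+1) := by rw [ht]; field_simp; ring
    have e2 : (1:ℝ)-t = (2*x)/(2*x+1) := by rw [ht]; field_simp; ring
    rw [e1, e2, Real.log_div (by linarith) h21.ne', Real.log_div (by linarith) h21.ne']
    have e3 : Real.log (2*x+2) = Real.log 2 + Real.log (x+1) := by
      rw [← Real.log_mul (by norm_num) (by linarith)]; ring_nf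
    have e4 : Real.log (2*x) = Real.log 2 + Real.log x := by
      rw [← Real.log_mul (by norm_num) hx.ne']
    rw [e3, e4]; ring
  have hxt : x + 1/2 = 1/(2*t) := by rw [ht]; field_simp
  have hu := log_upper ht0.le ht1
  have hl := log_lower ht0.le ht1
  have hpos : (0:ℝ) < x + 1/2 := by linarith
  constructor
  · have := mul_le_mul_of_nonneg_left hl hpos.le
    have hdpos : (0:ℝ) < 12*x^2+12*x+2 := by positivity
    have heq : (x + 1/2) * (2*t + 2*t^3/(3-t^2)) - 1 = 1/(12*x^2+12*x+2) := by
      have hs : (3:ℝ) - t^2 = (12*x^2+12*x+2)/(2*x+1)^2 := by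
        rw [ht]; field_simp; ring
      rw [hs, div_div_eq_mul_div, ht]
      field_simp
      ring
    rw [gg, hlog]
    nlinarith
  · have := mul_le_mul_of_nonneg_left hu hpos.le
    have hdpos : (0:ℝ) < 12*x*(x+1) := by positivity
    have heq : (x + 1/2) * (2*t + 2*t^3/(3*(1-t^2))) - 1 = 1/(12*x*(x+1)) := by
      have hs : (3:ℝ)*(1 - t^2) = (12*x*(x+1))/(2*x+1)^2 := by
        rw [ht]; field_simp; ring
      rw [hs, div_div_eq_mul_div, ht]
      field_simp
      ring
    rw [gg, hlog]
    nlinarith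

lemma gg_nonneg {x : ℝ} (hx : 0 < x) : 0 ≤ gg x := by
  have h := (gg_bounds hx).1
  have : (0:ℝ) < 12*x^2+12*x+2 := by positivity
  have : (0:ℝ) < 1/(12*x^2+12*x+2) := by positivity
  linarith

lemma gg_le_tele {x : ℝ} (hx : 0 < x) : gg x ≤ 1/(12*x) - 1/(12*(x+1)) := by
  have h := (gg_bounds hx).2
  have heq : 1/(12*x) - 1/(12*(x+1)) = 1/(12*x*(x+1)) := by
    field_simp; ring
  linarith

lemma gg_ge_tele {x : ℝ} (hx : 1 ≤ x) : 1/(12*x+1) - 1/(12*(x+1)+1) ≤ gg x := by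
  have h := (gg_bounds (by linarith : (0:ℝ) < x)).1
  have h1 : (0:ℝ) < 12*x+1 := by linarith
  have h2 : (0:ℝ) < 12*(x+1)+1 := by linarith
  have h3 : (0:ℝ) < 12*x^2+12*x+2 := by nlinarith
  have : 1/(12*x+1) - 1/(12*(x+1)+1) ≤ 1/(12*x^2+12*x+2) := by
    rw [div_sub_div _ _ h1.ne' h2.ne', div_le_div_iff₀ (by positivity) h3]
    nlinarith
  linarith
end Robbins

namespace Robbins

noncomputable def mu (r : ℝ) : ℝ := ∑' n : ℕ, gg (r + n)

lemma summable_gg {r : ℝ} (hr : 0 < r) : Summable (fun n : ℕ => gg (r + n)) := by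
  apply summable_of_sum_range_le (c := 1/(12*r))
    (fun n => gg_nonneg (by positivity))
  intro n
  have : ∀ m : ℕ, ∑ i ∈ Finset.range m, gg (r + i) ≤ 1/(12*r) - 1/(12*(r+m)) := by
    intro m
    induction m with
    | zero => simp
    | succ k ih =>
      rw [Finset.sum_range_succ]
      have h1 : gg (r + k) ≤ 1/(12*(r+k)) - 1/(12*(r+k+1)) := gg_le_tele (by positivity)
      push_cast
      have e : (12:ℝ)*(r+((k:ℝ)+1)) = 12*(r+(k:ℝ)+1) := by ring
      rw [e]
      linarith
  have h2 := this n
  have h3 : (0:ℝ) < 12*(r+n) := by positivity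
  have : (0:ℝ) < 1/(12*(r+n)) := by positivity
  linarith

lemma mu_nonneg {r : ℝ} (hr : 0 < r) : 0 ≤ mu r :=
  tsum_nonneg (fun n => gg_nonneg (by positivity))

lemma mu_le {r : ℝ} (hr : 0 < r) : mu r ≤ 1/(12*r) := by
  apply Real.tsum_le_of_sum_range_le (fun n => gg_nonneg (by positivity))
  intro n
  have : ∀ m : ℕ, ∑ i ∈ Finset.range m, gg (r + i) ≤ 1/(12*r) - 1/(12*(r+m)) := by
    intro m
    induction m with
    | zero => simp
    | succ k ih =>
      rw [Finset.sum_range_succ]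
      have h1 : gg (r + k) ≤ 1/(12*(r+k)) - 1/(12*(r+k+1)) := gg_le_tele (by positivity)
      push_cast
      have e : (12:ℝ)*(r+((k:ℝ)+1)) = 12*(r+(k:ℝ)+1) := by ring
      rw [e]
      linarith
  have h2 := this n
  have : (0:ℝ) < 1/(12*(r+n)) := by positivity
  linarith

lemma mu_ge {r : ℝ} (hr : 1 ≤ r) : 1/(12*r+1) ≤ mu r := by
  have hr0 : (0:ℝ) < r := by linarith
  have key : ∀ m : ℕ, 1/(12*r+1) - 1/(12*(r+m)+1) ≤ mu r := by
    intro m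
    have h1 : ∑ i ∈ Finset.range m, gg (r + i) ≤ mu r :=
      Summable.sum_le_tsum _ (fun i _ => gg_nonneg (by positivity)) (summable_gg hr0)
    have h2 : 1/(12*r+1) - 1/(12*(r+m)+1) ≤ ∑ i ∈ Finset.range m, gg (r + i) := by
      induction m with
      | zero => simp
      | succ k ih =>
        rw [Finset.sum_range_succ]
        have h3 : 1/(12*(r+k)+1) - 1/(12*((r+k)+1)+1) ≤ gg (r + k) :=
          gg_ge_tele (by push_cast; linarith)
        have h4 : ∑ i ∈ Finset.range k, gg (r + i) ≤ mu r :=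
          Summable.sum_le_tsum _ (fun i _ => gg_nonneg (by positivity)) (summable_gg hr0)
        push_cast
        have e : (12:ℝ)*(r+((k:ℝ)+1))+1 = 12*((r+(k:ℝ))+1)+1 := by ring
        rw [e]
        have h5 : ∑ i ∈ Finset.range (k+1), gg (r + i) ≤ mu r := h1
        rw [Finset.sum_range_succ] at h5
        push_cast at h5
        linarith [ih h4]
    linarith
  have hlim : Filter.Tendsto (fun m : ℕ => 1/(12*r+1) - 1/(12*(r+m)+1)) Filter.atTop
      (nhds (1/(12*r+1) - 0)) := by
    apply Filter.Tendsto.const_sub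
    simp only [one_div]
    apply Filter.Tendsto.comp tendsto_inv_atTop_zero
    apply Filter.tendsto_atTop_add_const_right
    apply Filter.Tendsto.const_mul_atTop (by norm_num : (0:ℝ) < 12)
    apply Filter.tendsto_atTop_add_const_left
    exact tendsto_natCast_atTop_atTop
  rw [sub_zero] at hlim
  exact le_of_tendsto hlim (Filter.Eventually.of_forall key)

lemma mu_rec {r : ℝ} (hr : 0 < r) : mu r = gg r + mu (r+1) := by
  have h := summable_gg hr
  have := Summable.tsum_eq_zero_add h
  simp only [Nat.cast_zero, add_zero] at this
  rw [mu, this]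
  congr 1
  rw [mu]
  apply tsum_congr
  intro n
  congr 1
  push_cast
  ring

end Robbins

namespace Robbins

lemma hasDerivAt_gg {x : ℝ} (hx : 0 < x) :
    HasDerivAt gg (Real.log (x+1) - Real.log x + (x+1/2)*(1/(x+1) - 1/x)) x := by
  have hx1 : (0:ℝ) < x + 1 := by linarith
  have hA : HasDerivAt (fun u : ℝ => Real.log (u+1)) (1/(x+1)) x := by
    simpa using (HasDerivAt.log ((hasDerivAt_id x).add_const 1) hx1.ne')
  have hB : HasDerivAt Real.log (1/x) x := by
    simpa [one_div] using Real.hasDerivAt_log hx.ne'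
  have hC : HasDerivAt (fun u : ℝ => u + 1/2) 1 x := (hasDerivAt_id x).add_const _
  have := (hC.mul (hA.sub hB)).sub_const 1
  refine this.congr_deriv ?_
  simp only [Pi.sub_apply]
  ring

lemma hasDerivAt_gg' {x : ℝ} (hx : 0 < x) :
    HasDerivAt (fun u : ℝ => Real.log (u+1) - Real.log u + (u+1/2)*(1/(u+1) - 1/u))
      (1/(2*x^2*(x+1)^2)) x := by
  have hx1 : (0:ℝ) < x + 1 := by linarith
  have hA : HasDerivAt (fun u : ℝ => Real.log (u+1)) (1/(x+1)) x := by
    simpa using (HasDerivAt.log ((hasDerivAt_id x).add_const 1) hx1.ne')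
  have hB : HasDerivAt Real.log (1/x) x := by
    simpa [one_div] using Real.hasDerivAt_log hx.ne'
  have hC : HasDerivAt (fun u : ℝ => u + 1/2) 1 x := (hasDerivAt_id x).add_const _
  have hD : HasDerivAt (fun u : ℝ => 1/(u+1)) (-1/(x+1)^2) x := by
    have := ((hasDerivAt_id x).add_const 1).inv hx1.ne'
    simpa [one_div, id_eq, Pi.inv_def] using this
  have hE : HasDerivAt (fun u : ℝ => 1/u) (-1/x^2) x := by
    have := (hasDerivAt_id x).inv hx.ne'
    simpa [one_div, id_eq, Pi.inv_def] using this
  have := (hA.sub hB).add (hC.mul (hD.sub hE))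
  refine this.congr_deriv ?_
  have h1 : x ≠ 0 := hx.ne'
  have h2 : x + 1 ≠ 0 := hx1.ne'
  simp only [Pi.sub_apply]
  field_simp
  ring

lemma convexOn_gg : ConvexOn ℝ (Set.Ioi 0) gg := by
  have hint : interior (Set.Ioi (0:ℝ)) = Set.Ioi 0 := interior_Ioi
  apply convexOn_of_deriv2_nonneg (convex_Ioi 0)
  · exact fun x hx => (hasDerivAt_gg hx).continuousAt.continuousWithinAt
  · rw [hint]
    exact fun x hx => (hasDerivAt_gg hx).differentiableAt.differentiableWithinAt
  · rw [hint]
    intro x hx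
    have hev : deriv gg =ᶠ[nhds x]
        (fun u : ℝ => Real.log (u+1) - Real.log u + (u+1/2)*(1/(u+1) - 1/u)) := by
      filter_upwards [IsOpen.mem_nhds isOpen_Ioi hx] with y hy
      exact (hasDerivAt_gg hy).deriv
    exact ((hasDerivAt_gg' hx).differentiableAt.congr_of_eventuallyEq hev).differentiableWithinAt
  · rw [hint]
    intro x hx
    have hev : deriv gg =ᶠ[nhds x]
        (fun u : ℝ => Real.log (u+1) - Real.log u + (u+1/2)*(1/(u+1) - 1/u)) := by
      filter_upwards [IsOpen.mem_nhds isOpen_Ioi hx] with y hy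
      exact (hasDerivAt_gg hy).deriv
    have : deriv (deriv gg) x = 1/(2*x^2*(x+1)^2) := by
      rw [Filter.EventuallyEq.deriv_eq hev]
      exact (hasDerivAt_gg' hx).deriv
    simp only [Function.iterate_succ, Function.iterate_zero, Function.comp_apply, Function.id_def]
    rw [this]
    positivity

lemma convexOn_mu : ConvexOn ℝ (Set.Ioi 0) mu := by
  refine ⟨convex_Ioi 0, ?_⟩
  intro x hx y hy a b ha hb hab
  simp only [smul_eq_mul] at *
  have hx0 : (0:ℝ) < x := hx
  have hy0 : (0:ℝ) < y := hy
  have hz0 : (0:ℝ) < a*x + b*y := by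
    rcases eq_or_lt_of_le ha with h|h
    · rw [← h] at hab ⊢; simp at hab; nlinarith
    · nlinarith
  have hsx := summable_gg hx0
  have hsy := summable_gg hy0
  have hsz := summable_gg hz0
  have hterm : ∀ n : ℕ, gg (a*x + b*y + n) ≤ a * gg (x + n) + b * gg (y + n) := by
    intro n
    have hxn : (x + n) ∈ Set.Ioi (0:ℝ) := by
      simp only [Set.mem_Ioi]; positivity
    have hyn : (y + n) ∈ Set.Ioi (0:ℝ) := by
      simp only [Set.mem_Ioi]; positivity
    have := convexOn_gg.2 hxn hyn ha hb hab
    simp only [smul_eq_mul] at this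
    have e : a*(x+n) + b*(y+n) = a*x + b*y + n := by
      have : a + b = 1 := hab
      nlinarith [this]
    rw [e] at this
    exact this
  calc mu (a*x + b*y) = ∑' n : ℕ, gg (a*x + b*y + n) := rfl
    _ ≤ ∑' n : ℕ, (a * gg (x + n) + b * gg (y + n)) := by
        apply Summable.tsum_le_tsum hterm hsz
        exact (hsx.mul_left a).add (hsy.mul_left b)
    _ = a * mu x + b * mu y := by
        rw [Summable.tsum_add (hsx.mul_left a) (hsy.mul_left b), tsum_mul_left, tsum_mul_left]
        rfl

end Robbins

namespace Robbins

noncomputable def D (n : ℕ) : ℝ := Real.log (n.factorial : ℝ) - ((n:ℝ)+1/2)*Real.log n + n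

lemma D_tendsto : Filter.Tendsto D Filter.atTop (nhds (Real.log (Real.sqrt (2*π)))) := by
  have h1 : Filter.Tendsto (fun n => Real.log (Stirling.stirlingSeq n)) Filter.atTop
      (nhds (Real.log (Real.sqrt π))) := by
    apply Filter.Tendsto.comp (Real.continuousAt_log (by positivity)).tendsto
      Stirling.tendsto_stirlingSeq_sqrt_pi
  have h2 : ∀ᶠ n : ℕ in Filter.atTop, D n = Real.log (Stirling.stirlingSeq n) + 1/2*Real.log 2 := by
    filter_upwards [Filter.eventually_ge_atTop 1] with n hn
    have hn0 : (0:ℝ) < n := by exact_mod_cast hn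
    rw [Stirling.log_stirlingSeq_formula, D]
    rw [Real.log_mul (by norm_num) hn0.ne', Real.log_div (by positivity) (Real.exp_ne_zero 1),
      Real.log_exp]
    ring
  have h3 : Filter.Tendsto D Filter.atTop (nhds (Real.log (Real.sqrt π) + 1/2*Real.log 2)) := by
    rw [Filter.tendsto_congr' h2]
    exact h1.add_const _
  convert h3 using 2
  rw [Real.log_sqrt (by positivity), Real.log_sqrt pi_pos.le,
    Real.log_mul (by norm_num) pi_pos.ne']
  ring

lemma gg_eq_D {n : ℕ} (hn : 1 ≤ n) : gg (n : ℝ) = D n - D (n+1) := by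
  have hn0 : (0:ℝ) < n := by exact_mod_cast hn
  have hfac : (0:ℝ) < (n.factorial : ℝ) := by exact_mod_cast Nat.factorial_pos n
  rw [gg, D, D]
  rw [Nat.factorial_succ]
  push_cast
  rw [Real.log_mul (by positivity) hfac.ne']
  ring

lemma mu_nat {n : ℕ} (hn : 1 ≤ n) : mu (n : ℝ) = mu 1 - 1 + D n := by
  induction n with
  | zero => omega
  | succ k ih =>
    rcases Nat.eq_or_lt_of_le hn with h|h
    · simp only [← h]
      norm_num [D]
    · have hk : 1 ≤ k := by omega
      have hk0 : (0:ℝ) < k := by exact_mod_cast hk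
      have hrec := mu_rec hk0
      have := ih hk
      have hD := gg_eq_D hk
      push_cast
      push_cast at this hD hrec ⊢
      linarith

lemma mu_one : mu 1 = 1 - Real.log (Real.sqrt (2*π)) := by
  have hmu0 : Filter.Tendsto (fun n : ℕ => mu n) Filter.atTop (nhds 0) := by
    apply squeeze_zero' (f := fun n : ℕ => mu n) (g := fun n : ℕ => 1/(12*n))
    · filter_upwards [Filter.eventually_ge_atTop 1] with n hn
      exact mu_nonneg (by exact_mod_cast hn)
    · filter_upwards [Filter.eventually_ge_atTop 1] with n hn
      exact mu_le (by exact_mod_cast hn)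
    · simp only [one_div]
      apply Filter.Tendsto.comp tendsto_inv_atTop_zero
      apply Filter.Tendsto.const_mul_atTop (by norm_num : (0:ℝ) < 12)
      exact tendsto_natCast_atTop_atTop
  have h2 : Filter.Tendsto (fun n : ℕ => mu n) Filter.atTop
      (nhds (mu 1 - 1 + Real.log (Real.sqrt (2*π)))) := by
    have : (fun n : ℕ => mu n) =ᶠ[Filter.atTop] (fun n : ℕ => mu 1 - 1 + D n) := by
      filter_upwards [Filter.eventually_ge_atTop 1] with n hn
      exact mu_nat hn
    rw [Filter.tendsto_congr' this]
    exact (D_tendsto.const_add _)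
  have := tendsto_nhds_unique hmu0 h2
  linarith

end Robbins

namespace Robbins

noncomputable def FF (r : ℝ) : ℝ :=
  Real.exp ((r - 1/2) * Real.log r - r + Real.log (Real.sqrt (2*π)) + mu r)

lemma hasDerivAt_w {x : ℝ} (hx : 0 < x) :
    HasDerivAt (fun u : ℝ => (u - 1/2) * Real.log u - u + Real.log (Real.sqrt (2*π)))
      (Real.log x - 1/(2*x)) x := by
  have hA : HasDerivAt (fun u : ℝ => (u - 1/2) * Real.log u)
      (1 * Real.log x + (x - 1/2) * (1/x)) x := by
    have := ((hasDerivAt_id x).sub_const (1/2)).mul (Real.hasDerivAt_log hx.ne')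
    simpa [one_div, Pi.mul_def] using this
  have := (hA.sub (hasDerivAt_id x)).add_const (Real.log (Real.sqrt (2*π)))
  refine this.congr_deriv ?_
  field_simp
  ring

lemma hasDerivAt_w' {x : ℝ} (hx : 0 < x) :
    HasDerivAt (fun u : ℝ => Real.log u - 1/(2*u)) (1/x + 1/(2*x^2)) x := by
  have h2 : (2:ℝ)*x ≠ 0 := by positivity
  have hB : HasDerivAt (fun u : ℝ => 1/(2*u)) (-2/(2*x)^2) x := by
    have := ((hasDerivAt_id x).const_mul 2).inv h2
    simpa [one_div, id_eq, Pi.inv_def] using this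
  have := (Real.hasDerivAt_log hx.ne').sub hB
  refine this.congr_deriv ?_
  field_simp
  ring

lemma convexOn_w : ConvexOn ℝ (Set.Ioi 0)
    (fun u : ℝ => (u - 1/2) * Real.log u - u + Real.log (Real.sqrt (2*π))) := by
  have hint : interior (Set.Ioi (0:ℝ)) = Set.Ioi 0 := interior_Ioi
  set w := fun u : ℝ => (u - 1/2) * Real.log u - u + Real.log (Real.sqrt (2*π)) with hw
  apply convexOn_of_deriv2_nonneg (convex_Ioi 0)
  · exact fun x hx => (hasDerivAt_w hx).continuousAt.continuousWithinAt
  · rw [hint]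
    exact fun x hx => (hasDerivAt_w hx).differentiableAt.differentiableWithinAt
  · rw [hint]
    intro x hx
    have hev : deriv w =ᶠ[nhds x] (fun u : ℝ => Real.log u - 1/(2*u)) := by
      filter_upwards [IsOpen.mem_nhds isOpen_Ioi hx] with y hy
      exact (hasDerivAt_w hy).deriv
    exact ((hasDerivAt_w' hx).differentiableAt.congr_of_eventuallyEq hev).differentiableWithinAt
  · rw [hint]
    intro x hx
    have hev : deriv w =ᶠ[nhds x] (fun u : ℝ => Real.log u - 1/(2*u)) := by
      filter_upwards [IsOpen.mem_nhds isOpen_Ioi hx] with y hy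
      exact (hasDerivAt_w hy).deriv
    have : deriv (deriv w) x = 1/x + 1/(2*x^2) := by
      rw [Filter.EventuallyEq.deriv_eq hev]
      exact (hasDerivAt_w' hx).deriv
    simp only [Function.iterate_succ, Function.iterate_zero, Function.comp_apply, Function.id_def]
    rw [this]
    have hx0 : (0:ℝ) < x := hx
    positivity

lemma FF_eq_Gamma : Set.EqOn FF Real.Gamma (Set.Ioi (0:ℝ)) := by
  apply Real.eq_Gamma_of_log_convex
  · have : Real.log ∘ FF = fun r =>
        ((r - 1/2) * Real.log r - r + Real.log (Real.sqrt (2*π))) + mu r := by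
      funext r
      simp only [Function.comp_apply, FF, Real.log_exp]
    rw [this]
    exact convexOn_w.add convexOn_mu
  · intro y hy
    have hy' : y * FF y = Real.exp (Real.log y +
        ((y - 1/2) * Real.log y - y + Real.log (Real.sqrt (2*π)) + mu y)) := by
      rw [Real.exp_add, Real.exp_log hy, FF]
    rw [FF, hy']
    congr 1
    rw [mu_rec hy, gg]
    ring
  · intro y _
    exact Real.exp_pos _
  · rw [FF, mu_one]
    norm_num

lemma Gamma_succ_eq {r : ℝ} (hr : 0 < r) :
    Real.Gamma (r + 1) =
      Real.exp ((r + 1/2) * Real.log r - r + Real.log (Real.sqrt (2*π)) + mu r) := by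
  rw [Real.Gamma_add_one hr.ne', ← FF_eq_Gamma (Set.mem_Ioi.2 hr), FF,
    ← Real.exp_log hr, ← Real.exp_add]
  congr 1
  rw [Real.log_exp]
  ring

end Robbins

open Robbins in
theorem robbins_stirling_aux :
    (∀ r : ℝ, 1 ≤ r →
      Real.sqrt (2 * π) * r ^ (r + 1 / 2 : ℝ) * Real.exp (-r) * Real.exp (1 / (12 * r + 1)) ≤
          Real.Gamma (r + 1) ∧
        Real.Gamma (r + 1) ≤
          Real.sqrt (2 * π) * r ^ (r + 1 / 2 : ℝ) * Real.exp (-r) * Real.exp (1 / (12 * r))) ∧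
    (∀ r : ℕ, 1 ≤ r →
      Real.sqrt (2 * π) * (r : ℝ) ^ ((r : ℝ) + 1 / 2) * Real.exp (-(r : ℝ)) *
          Real.exp (1 / (12 * (r : ℝ) + 1)) ≤ (Nat.factorial r : ℝ) ∧
        (Nat.factorial r : ℝ) ≤
          Real.sqrt (2 * π) * (r : ℝ) ^ ((r : ℝ) + 1 / 2) * Real.exp (-(r : ℝ)) *
            Real.exp (1 / (12 * (r : ℝ)))) := by
  have main : ∀ r : ℝ, 1 ≤ r →
      Real.sqrt (2 * π) * r ^ (r + 1 / 2 : ℝ) * Real.exp (-r) * Real.exp (1 / (12 * r + 1)) ≤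
          Real.Gamma (r + 1) ∧
        Real.Gamma (r + 1) ≤
          Real.sqrt (2 * π) * r ^ (r + 1 / 2 : ℝ) * Real.exp (-r) * Real.exp (1 / (12 * r)) := by
    intro r hr
    have hr0 : (0:ℝ) < r := by linarith
    have hsq : (0:ℝ) < Real.sqrt (2*π) := Real.sqrt_pos.2 (by positivity)
    have hprod : ∀ s : ℝ,
        Real.sqrt (2 * π) * r ^ (r + 1 / 2 : ℝ) * Real.exp (-r) * Real.exp s =
          Real.exp ((r + 1/2) * Real.log r - r + Real.log (Real.sqrt (2*π)) + s) := by
      intro s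
      rw [Real.rpow_def_of_pos hr0, ← Real.exp_log hsq, ← Real.exp_add, ← Real.exp_add,
        ← Real.exp_add]
      congr 1
      rw [Real.log_exp]
      ring
    rw [Gamma_succ_eq hr0, hprod, hprod]
    constructor
    · rw [Real.exp_le_exp]
      have := mu_ge hr
      linarith
    · rw [Real.exp_le_exp]
      have := mu_le hr0
      linarith
  refine ⟨main, fun n hn => ?_⟩
  have h1 : (1:ℝ) ≤ (n:ℝ) := by exact_mod_cast hn
  have := main (n:ℝ) h1
  rwa [Real.Gamma_nat_eq_factorial] at this

/-- Robbins' form of Stirling's approximation: for all real `r ≥ 1`,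
`√(2π) r^(r+1/2) e^(−r) e^(1/(12r+1)) ≤ Γ(r+1) ≤ √(2π) r^(r+1/2) e^(−r) e^(1/(12r))`;
in particular the same bounds hold for `r!` when `r` is a natural number `≥ 1`. -/
theorem robbins_stirling :
    (∀ r : ℝ, 1 ≤ r →
      Real.sqrt (2 * π) * r ^ (r + 1 / 2 : ℝ) * Real.exp (-r) * Real.exp (1 / (12 * r + 1)) ≤
          Real.Gamma (r + 1) ∧
        Real.Gamma (r + 1) ≤
          Real.sqrt (2 * π) * r ^ (r + 1 / 2 : ℝ) * Real.exp (-r) * Real.exp (1 / (12 * r))) ∧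
    (∀ r : ℕ, 1 ≤ r →
      Real.sqrt (2 * π) * (r : ℝ) ^ ((r : ℝ) + 1 / 2) * Real.exp (-(r : ℝ)) *
          Real.exp (1 / (12 * (r : ℝ) + 1)) ≤ (Nat.factorial r : ℝ) ∧
        (Nat.factorial r : ℝ) ≤
          Real.sqrt (2 * π) * (r : ℝ) ^ ((r : ℝ) + 1 / 2) * Real.exp (-(r : ℝ)) *
            Real.exp (1 / (12 * (r : ℝ)))) := by
  exact robbins_stirling_aux
end

section
/- Define R(p,k,n) = ((4/(e·π)) · n(p+1)/((p−k)(n−1)+1))^{p+1} · √(4p+6). For fixed integers k ≥ 0 and n ≥ 2, if R(p̄,k,n) ≤ 1 for some p̄ > k+1, then R(p,k,n) is strictly decreasing in p for p ≥ p̄. -/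
open Real

noncomputable def Rf (k n p : ℕ) : ℝ :=
  (4 / (Real.exp 1 * π) * ((n : ℝ) * ((p : ℝ) + 1)) /
      (((p : ℝ) - (k : ℝ)) * ((n : ℝ) - 1) + 1)) ^ (p + 1) *
    Real.sqrt (4 * (p : ℝ) + 6)

lemma Rf_step (k n p : ℕ) (hn : 2 ≤ n) (hp : k + 1 < p) (hRp : Rf k n p ≤ 1) :
    Rf k n (p + 1) < Rf k n p := by
  have hpk : (k : ℝ) + 2 ≤ (p : ℝ) := by exact_mod_cast (by omega : k + 2 ≤ p)
  have hn1 : (1 : ℝ) ≤ (n : ℝ) - 1 := by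
    have : (2 : ℝ) ≤ (n : ℝ) := by exact_mod_cast hn
    linarith
  have hn0 : (0 : ℝ) < (n : ℝ) := by
    have : (2 : ℝ) ≤ (n : ℝ) := by exact_mod_cast hn
    linarith
  have hk0 : (0 : ℝ) ≤ (k : ℝ) := Nat.cast_nonneg k
  set d : ℝ := ((p : ℝ) - (k : ℝ)) * ((n : ℝ) - 1) + 1 with hd_def
  set d' : ℝ := (((p : ℝ) + 1) - (k : ℝ)) * ((n : ℝ) - 1) + 1 with hd'_def
  have hd : 0 < d := by
    have h1 : (0:ℝ) < (p : ℝ) - (k : ℝ) := by linarith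
    nlinarith
  have hd' : 0 < d' := by
    have h1 : (0:ℝ) < (p : ℝ) + 1 - (k : ℝ) := by linarith
    nlinarith
  have hc : (0 : ℝ) < 4 / (Real.exp 1 * π) := by positivity
  set b : ℝ := 4 / (Real.exp 1 * π) * ((n : ℝ) * ((p : ℝ) + 1)) / d with hb_def
  set b' : ℝ := 4 / (Real.exp 1 * π) * ((n : ℝ) * (((p : ℝ) + 1) + 1)) / d' with hb'_def
  have hb : 0 < b := div_pos (mul_pos hc (by positivity)) hd
  have hb'0 : 0 ≤ b' := le_of_lt (div_pos (mul_pos hc (by positivity)) hd')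
  have hb'b : b' ≤ b := by
    rw [hb_def, hb'_def, div_le_div_iff₀ hd' hd]
    have key : (((p : ℝ) + 1) + 1) * d ≤ ((p : ℝ) + 1) * d' := by
      rw [hd_def, hd'_def]
      nlinarith [mul_nonneg (by linarith : (0:ℝ) ≤ (n:ℝ) - 2) (by linarith : (0:ℝ) ≤ (k:ℝ) + 1)]
    calc 4 / (Real.exp 1 * π) * ((n : ℝ) * (((p : ℝ) + 1) + 1)) * d
        = (4 / (Real.exp 1 * π) * (n : ℝ)) * ((((p : ℝ) + 1) + 1) * d) := by ring
      _ ≤ (4 / (Real.exp 1 * π) * (n : ℝ)) * (((p : ℝ) + 1) * d') := by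
          exact mul_le_mul_of_nonneg_left key (by positivity)
      _ = 4 / (Real.exp 1 * π) * ((n : ℝ) * ((p : ℝ) + 1)) * d' := by ring
  set A : ℝ := 4 * (p : ℝ) + 6 with hA_def
  have hA6 : (6 : ℝ) ≤ A := by
    have : (0:ℝ) ≤ (p:ℝ) := Nat.cast_nonneg p
    simp only [hA_def]; linarith
  have hA0 : (0 : ℝ) < A := by linarith
  set s : ℝ := Real.sqrt A with hs_def
  set s' : ℝ := Real.sqrt (4 * ((p : ℝ) + 1) + 6) with hs'_def
  have hs : 0 < s := Real.sqrt_pos.mpr hA0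
  have hs' : 0 < s' := Real.sqrt_pos.mpr (by linarith [Nat.cast_nonneg (α := ℝ) p])
  have hs2 : s ^ 2 = A := Real.sq_sqrt hA0.le
  have hs'2 : s' ^ 2 = A + 4 := by
    rw [hs'_def, Real.sq_sqrt (by linarith [Nat.cast_nonneg (α := ℝ) p])]
    simp only [hA_def]; ring
  -- Key inequality: (A+4)^(p+1) < A^(p+2)
  have hkey : (A + 4) ^ (p + 1) < A ^ (p + 2) := by
    have h1 : (A + 4) ^ (p + 1) = A ^ (p + 1) * (1 + 4 / A) ^ (p + 1) := by
      rw [← mul_pow]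
      congr 1
      field_simp
    have h2 : (1 + 4 / A) ^ (p + 1) ≤ Real.exp (((p : ℝ) + 1) * (4 / A)) := by
      have hle : 1 + 4 / A ≤ Real.exp (4 / A) := by
        have := Real.add_one_le_exp (4 / A)
        linarith
      calc (1 + 4 / A) ^ (p + 1) ≤ (Real.exp (4 / A)) ^ (p + 1) :=
            pow_le_pow_left₀ (by positivity) hle _
        _ = Real.exp (((p : ℝ) + 1) * (4 / A)) := by
            rw [← Real.exp_nat_mul]
            push_cast
            ring_nf
    have h3 : ((p : ℝ) + 1) * (4 / A) < 1 := by
      rw [mul_div_assoc'] at *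
      rw [div_lt_one hA0]
      have : (0:ℝ) ≤ (p:ℝ) := Nat.cast_nonneg p
      simp only [hA_def]; linarith
    have h4 : Real.exp (((p : ℝ) + 1) * (4 / A)) < A := by
      calc Real.exp (((p : ℝ) + 1) * (4 / A)) < Real.exp 1 := Real.exp_lt_exp.mpr h3
        _ < 2.7182818286 := Real.exp_one_lt_d9
        _ ≤ A := by linarith
    have hApos : (0:ℝ) < A ^ (p + 1) := pow_pos hA0 _
    calc (A + 4) ^ (p + 1) = A ^ (p + 1) * (1 + 4 / A) ^ (p + 1) := h1
      _ ≤ A ^ (p + 1) * Real.exp (((p : ℝ) + 1) * (4 / A)) := by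
          exact mul_le_mul_of_nonneg_left h2 hApos.le
      _ < A ^ (p + 1) * A := by exact mul_lt_mul_of_pos_left h4 hApos
      _ = A ^ (p + 2) := by ring
  -- hence s'^(p+1) < s^(p+2)
  have hss : s' ^ (p + 1) < s ^ (p + 2) := by
    have hsq : (s' ^ (p + 1)) ^ 2 < (s ^ (p + 2)) ^ 2 := by
      have e1 : (s' ^ (p + 1)) ^ 2 = (s' ^ 2) ^ (p + 1) := by
        rw [← pow_mul, ← pow_mul, mul_comm]
      have e2 : (s ^ (p + 2)) ^ 2 = (s ^ 2) ^ (p + 2) := by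
        rw [← pow_mul, ← pow_mul, mul_comm]
      rw [e1, e2, hs2, hs'2]
      exact hkey
    exact lt_of_pow_lt_pow_left₀ 2 (pow_nonneg hs.le _) hsq
  -- from hRp : b^(p+1) * s ≤ 1
  have hRp' : b ^ (p + 1) * s ≤ 1 := hRp
  have hb1 : b ^ (p + 1) ≤ 1 / s := by
    rw [le_div_iff₀ hs]
    exact hRp'
  have h4 : b ^ (p + 1) * s' ^ (p + 1) < s ^ (p + 1) := by
    calc b ^ (p + 1) * s' ^ (p + 1) ≤ (1 / s) * s' ^ (p + 1) :=
          mul_le_mul_of_nonneg_right hb1 (pow_nonneg hs'.le _)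
      _ < (1 / s) * s ^ (p + 2) := mul_lt_mul_of_pos_left hss (by positivity)
      _ = s ^ (p + 1) := by
          rw [pow_succ' s (p + 1)]
          field_simp
  have h5 : b * s' < s := by
    have : (b * s') ^ (p + 1) < s ^ (p + 1) := by
      rw [mul_pow]; exact h4
    exact lt_of_pow_lt_pow_left₀ (p + 1) hs.le this
  -- conclude
  have goal1 : Rf k n (p + 1) = b' ^ (p + 2) * s' := by
    simp only [Rf, hb'_def, hs'_def, hd'_def]
    push_cast
    ring_nf
  have goal2 : Rf k n p = b ^ (p + 1) * s := rfl
  rw [goal1, goal2]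
  calc b' ^ (p + 2) * s' ≤ b ^ (p + 2) * s' :=
        mul_le_mul_of_nonneg_right (pow_le_pow_left₀ hb'0 hb'b _) hs'.le
    _ = b ^ (p + 1) * (b * s') := by ring
    _ < b ^ (p + 1) * s := mul_lt_mul_of_pos_left h5 (pow_pos hb _)

/-- For fixed integers `k ≥ 0` and `n ≥ 2`: if `R(p̄,k,n) ≤ 1` for some `p̄ > k+1`, then
`R(p,k,n) = ((4/(eπ)) · n(p+1)/((p−k)(n−1)+1))^(p+1) √(4p+6)` is strictly decreasing in `p`
for `p ≥ p̄`. -/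
theorem R_strict_anti_in_p (k : ℕ) (n : ℕ) (hn : 2 ≤ n) (pbar : ℕ) (hpbar : k + 1 < pbar)
    (hR : (4 / (Real.exp 1 * π) * ((n : ℝ) * ((pbar : ℝ) + 1)) /
            (((pbar : ℝ) - (k : ℝ)) * ((n : ℝ) - 1) + 1)) ^ (pbar + 1) *
          Real.sqrt (4 * (pbar : ℝ) + 6) ≤ 1) :
    ∀ p : ℕ, pbar ≤ p →
      (4 / (Real.exp 1 * π) * ((n : ℝ) * ((p + 1 : ℝ) + 1)) /
            (((p + 1 : ℝ) - (k : ℝ)) * ((n : ℝ) - 1) + 1)) ^ (p + 1 + 1) *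
          Real.sqrt (4 * (p + 1 : ℝ) + 6) <
        (4 / (Real.exp 1 * π) * ((n : ℝ) * ((p : ℝ) + 1)) /
            (((p : ℝ) - (k : ℝ)) * ((n : ℝ) - 1) + 1)) ^ (p + 1) *
          Real.sqrt (4 * (p : ℝ) + 6) := by
  have hle : ∀ p : ℕ, pbar ≤ p → Rf k n p ≤ 1 := by
    intro p hp
    induction p with
    | zero => omega
    | succ q ih =>
      rcases eq_or_lt_of_le hp with heq | hlt
      · rw [← heq]; exact hR
      · have hq : pbar ≤ q := by omega
        have hk : k + 1 < q := by omega
        exact le_of_lt (lt_of_lt_of_le (Rf_step k n q hn hk (ih hq)) (ih hq))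
  intro p hp
  have hstep := Rf_step k n p hn (lt_of_lt_of_le hpbar hp) (hle p hp)
  simp only [Rf] at hstep
  push_cast at hstep ⊢
  convert hstep using 4 <;> ring
end

section
/- For every odd integer p ≥ 1 and any real numbers a_s, b_s indexed by even s with 0 ≤ s ≤ p−1, there exists a polynomial g of degree at most p such that g^{(s)}(0) = a_s and g^{(s)}(1) = b_s for every even s with 0 ≤ s ≤ p−1. -/
open Polynomial

/-- Formal antiderivative of a real polynomial. -/
noncomputable def pint (q : Polynomial ℝ) : Polynomial ℝ :=
  q.sum fun n c => C (c / (n + 1)) * X ^ (n + 1)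

theorem derivative_pint (q : Polynomial ℝ) : derivative (pint q) = q := by
  unfold pint
  rw [Polynomial.sum, derivative_sum]
  have step : ∀ n ∈ q.support,
      derivative (C (q.coeff n / (n + 1)) * X ^ (n + 1)) = C (q.coeff n) * X ^ n := by
    intro n _
    have hn : ((n : ℝ) + 1) ≠ 0 := by positivity
    rw [derivative_C_mul_X_pow]
    push_cast
    rw [div_mul_cancel₀ _ hn]
  rw [Finset.sum_congr rfl step]
  conv_rhs => rw [← q.sum_C_mul_X_pow_eq]
  rw [Polynomial.sum]

theorem natDegree_pint_le (q : Polynomial ℝ) : (pint q).natDegree ≤ q.natDegree + 1 := by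
  unfold pint
  rw [Polynomial.sum]
  refine Polynomial.natDegree_sum_le_of_forall_le _ _ fun n hn => ?_
  calc (C (q.coeff n / (n+1)) * X ^ (n+1)).natDegree ≤ n + 1 := by
        apply (natDegree_C_mul_le _ _).trans; simp
    _ ≤ q.natDegree + 1 := by
        exact Nat.add_le_add_right (le_natDegree_of_mem_supp n hn) 1

theorem key (k : ℕ) : ∀ a b : ℕ → ℝ,
    ∃ g : Polynomial ℝ, g.natDegree ≤ 2 * k + 1 ∧
      ∀ s : ℕ, s ≤ 2 * k → Even s →
        (Polynomial.derivative^[s] g).eval 0 = a s ∧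
        (Polynomial.derivative^[s] g).eval 1 = b s := by
  induction k with
  | zero =>
    intro a b
    refine ⟨C (a 0) + C (b 0 - a 0) * X, ?_, ?_⟩
    · exact (natDegree_add_le _ _).trans
        (max_le (by simp) ((natDegree_C_mul_le _ _).trans (by simp)))
    · intro s hs _
      interval_cases s
      simp
  | succ k ih =>
    intro a b
    obtain ⟨h, hdeg, hcond⟩ := ih (fun s => a (s + 2)) (fun s => b (s + 2))
    set H := pint (pint h) with hH
    set c : ℝ := a 0 - H.eval 0 with hc
    set d : ℝ := b 0 - H.eval 1 - c with hd
    refine ⟨H + C c + C d * X, ?_, ?_⟩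
    · have h1 := natDegree_pint_le (pint h)
      have h2 := natDegree_pint_le h
      refine (natDegree_add_le _ _).trans (max_le ((natDegree_add_le _ _).trans
        (max_le (by simp only [hH]; omega) (by simp)))
        ((natDegree_C_mul_le _ _).trans (by simp)))
    · intro s hs hev
      rcases s with _ | _ | s
      · constructor <;> simp [hc, hd]
      · exact absurd hev (by decide)
      · have h2 : derivative^[s + 2] (H + C c + C d * X) = derivative^[s] h := by
          have : derivative (derivative (H + C c + C d * X)) = h := by
            simp [hH, derivative_pint]
          have h22 : derivative^[2] (H + C c + C d * X) = h := by
            rw [show (2 : ℕ) = 1 + 1 from rfl, Function.iterate_add_apply]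
            simpa using this
          rw [Function.iterate_add_apply, h22]
        rw [h2]
        have hs' : s ≤ 2 * k := by omega
        have hev' : Even s := by
          rcases hev with ⟨m, hm⟩
          exact ⟨m - 1, by omega⟩
        exact hcond s hs' hev'

/-- For every odd integer `p ≥ 1` and data `a_s, b_s` (for even `s`, `0 ≤ s ≤ p−1`), there is a
polynomial `g` of degree at most `p` with `g⁽ˢ⁾(0) = a_s` and `g⁽ˢ⁾(1) = b_s` for all even
`s ≤ p−1`. -/
theorem even_order_hermite_interpolation (p : ℕ) (hp : 1 ≤ p) (hodd : Odd p)
    (a b : ℕ → ℝ) :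
    ∃ g : Polynomial ℝ, g.natDegree ≤ p ∧
      ∀ s : ℕ, s ≤ p - 1 → Even s →
        (Polynomial.derivative^[s] g).eval 0 = a s ∧
        (Polynomial.derivative^[s] g).eval 1 = b s := by
  obtain ⟨k, hk⟩ := hodd
  obtain ⟨g, hg, hcond⟩ := key k a b
  exact ⟨g, by omega, fun s hs => hcond s (by omega)⟩
end

section
/- For every even integer p ≥ 0 and any real numbers a_s, b_s indexed by odd s with 1 ≤ s ≤ p−1, there exists a polynomial g of degree at most p such that g^{(s)}(0) = a_s and g^{(s)}(1) = b_s for every odd s with 1 ≤ s ≤ p−1. -/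
open Polynomial

private lemma aux_interp (k : ℕ) : ∀ a b : ℕ → ℝ,
    ∃ g : Polynomial ℝ, g.natDegree ≤ 2 * k ∧
      ∀ s : ℕ, s ≤ 2 * k - 1 → Odd s →
        (Polynomial.derivative^[s] g).eval 0 = a s ∧
        (Polynomial.derivative^[s] g).eval 1 = b s := by
  induction k with
  | zero =>
    intro a b
    refine ⟨0, by simp, fun s hs hodd => absurd hodd ?_⟩
    simp only [Nat.le_zero.mp (by omega : s ≤ 0)]
    decide
  | succ k ih =>
    intro a b
    set c1 : ℝ := a (2 * k + 1) / (Nat.factorial (2 * k + 1)) with hc1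
    set c2 : ℝ := (b (2 * k + 1) - a (2 * k + 1)) / (Nat.factorial (2 * k + 2)) with hc2
    set m : Polynomial ℝ := C c2 * X ^ (2 * k + 2) + C c1 * X ^ (2 * k + 1) with hm
    obtain ⟨r, hrdeg, hr⟩ := ih
      (fun s => a s - (Polynomial.derivative^[s] m).eval 0)
      (fun s => b s - (Polynomial.derivative^[s] m).eval 1)
    refine ⟨m + r, ?_, ?_⟩
    · refine (natDegree_add_le _ _).trans (max_le ?_ (hrdeg.trans (by omega)))
      refine (natDegree_add_le _ _).trans (max_le ?_ ?_)
      · exact (natDegree_C_mul_le _ _).trans (by simp [natDegree_X_pow]; omega)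
      · exact (natDegree_C_mul_le _ _).trans (by simp [natDegree_X_pow])
    · intro s hs hodd
      have hms : ∀ j, Polynomial.derivative^[j] m =
          C c2 * (C ((2 * k + 2).descFactorial j : ℝ) * X ^ (2 * k + 2 - j)) +
          C c1 * (C ((2 * k + 1).descFactorial j : ℝ) * X ^ (2 * k + 1 - j)) := by
        intro j
        rw [hm, iterate_map_add, iterate_derivative_C_mul, iterate_derivative_C_mul,
          iterate_derivative_X_pow_eq_C_mul, iterate_derivative_X_pow_eq_C_mul]
      rw [iterate_map_add]
      by_cases hstop : s = 2 * k + 1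
      · subst hstop
        have hr0 : Polynomial.derivative^[2 * k + 1] r = 0 :=
          iterate_derivative_eq_zero (by omega)
        have hfac1 : ((Nat.factorial (2 * k + 1)) : ℝ) ≠ 0 := by positivity
        have hfac2 : ((Nat.factorial (2 * k + 2)) : ℝ) ≠ 0 := by positivity
        have hd1 : (2 * k + 1).descFactorial (2 * k + 1) = Nat.factorial (2 * k + 1) :=
          Nat.descFactorial_self (2 * k + 1)
        have hd2 : (2 * k + 2).descFactorial (2 * k + 1) = Nat.factorial (2 * k + 2) := by
          have h := Nat.descFactorial_self (2 * k + 2)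
          rwa [show (2 * k + 2) = (2 * k + 1) + 1 by omega, Nat.descFactorial_succ,
            show 2 * k + 1 + 1 - (2 * k + 1) = 1 by omega, one_mul] at h
        have hsub1 : 2 * k + 2 - (2 * k + 1) = 1 := by omega
        have hsub0 : 2 * k + 1 - (2 * k + 1) = 0 := by omega
        constructor
        · rw [hr0, add_zero, hms, hd1, hd2, hsub1, hsub0]
          simp only [eval_add, eval_mul, eval_pow, eval_C, eval_X, pow_one, pow_zero,
            mul_zero, zero_add, mul_one, hc1]
          field_simp
        · rw [hr0, add_zero, hms, hd1, hd2, hsub1, hsub0]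
          simp only [eval_add, eval_mul, eval_pow, eval_C, eval_X, pow_one, pow_zero,
            mul_one, hc1, hc2]
          field_simp
          ring
      · have hsle : s ≤ 2 * k - 1 := by
          obtain ⟨t, rfl⟩ := hodd; omega
        obtain ⟨h0, h1⟩ := hr s hsle hodd
        constructor
        · simp only [eval_add, h0]; ring
        · simp only [eval_add, h1]; ring

/-- For every even integer `p ≥ 0` and data `a_s, b_s` (for odd `s`, `1 ≤ s ≤ p−1`), there is a
polynomial `g` of degree at most `p` with `g⁽ˢ⁾(0) = a_s` and `g⁽ˢ⁾(1) = b_s` for all odd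
`s ≤ p−1`. -/
theorem odd_order_hermite_interpolation (p : ℕ) (heven : Even p) (a b : ℕ → ℝ) :
    ∃ g : Polynomial ℝ, g.natDegree ≤ p ∧
      ∀ s : ℕ, s ≤ p - 1 → Odd s →
        (Polynomial.derivative^[s] g).eval 0 = a s ∧
        (Polynomial.derivative^[s] g).eval 1 = b s := by
  obtain ⟨k, rfl⟩ := heven
  have := aux_interp k a b
  rwa [two_mul] at this
end
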